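/- arXiv:1109.4428 — 3 statements merged into one kernel-verified Lean document; each statement's English description precedes it below -/
import Mathlib

section
/- Let k ≥ 1 and let 0 < γ < 1/4. There do not exist points p₁, p₂, q₁, q₂ on the unit sphere S^k ⊆ ℝ^{k+1} such that dist(p₁,p₂) ≥ 2 − γ, dist(q₁,q₂) ≥ 2 − γ, and dist(p_i, q_j) ≤ √2 − γ for all i, j ∈ {1,2}. -/
set_option maxHeartbeats 1000000

/-- Property (P4): for `0 < γ < 1/4` there are no four points on the unit sphere
`S^k ⊆ ℝ^{k+1}` with `d(p₁,p₂) ≥ 2-γ`, `d(q₁,q₂) ≥ 2-γ` and all cross distances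
at most `√2 - γ`. -/
theorem stmt_0 (k : ℕ) (hk : 1 ≤ k) (γ : ℝ) (hγ0 : 0 < γ) (hγ : γ < 1/4)
    (p₁ p₂ q₁ q₂ : EuclideanSpace ℝ (Fin (k+1)))
    (hp₁ : ‖p₁‖ = 1) (hp₂ : ‖p₂‖ = 1) (hq₁ : ‖q₁‖ = 1) (hq₂ : ‖q₂‖ = 1)
    (hpp : 2 - γ ≤ dist p₁ p₂) (hqq : 2 - γ ≤ dist q₁ q₂)
    (h11 : dist p₁ q₁ ≤ Real.sqrt 2 - γ) (h12 : dist p₁ q₂ ≤ Real.sqrt 2 - γ)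
    (h21 : dist p₂ q₁ ≤ Real.sqrt 2 - γ) (h22 : dist p₂ q₂ ≤ Real.sqrt 2 - γ) :
    False := by
  have hs2 : Real.sqrt 2 ^ 2 = 2 := Real.sq_sqrt (by norm_num)
  have hs14 : (1.4 : ℝ) ≤ Real.sqrt 2 := by
    nlinarith [Real.sqrt_nonneg 2]
  -- convert distances to inner ℝ products
  have key : ∀ x y : EuclideanSpace ℝ (Fin (k+1)),
      dist x y ^ 2 = ‖x‖^2 - 2 * inner ℝ x y + ‖y‖^2 := by
    intro x y
    rw [dist_eq_norm, norm_sub_sq_real]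
  have sqle : ∀ x y : EuclideanSpace ℝ (Fin (k+1)), dist x y ≤ Real.sqrt 2 - γ →
      dist x y ^ 2 ≤ (Real.sqrt 2 - γ)^2 := by
    intro x y h
    have := dist_nonneg (x := x) (y := y)
    nlinarith
  have sqge : ∀ x y : EuclideanSpace ℝ (Fin (k+1)), 2 - γ ≤ dist x y →
      (2 - γ)^2 ≤ dist x y ^ 2 := by
    intro x y h
    have h0 : (0:ℝ) ≤ 2 - γ := by linarith
    nlinarith
  have e11 := sqle _ _ h11; rw [key, hp₁, hq₁] at e11
  have e12 := sqle _ _ h12; rw [key, hp₁, hq₂] at e12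
  have e21 := sqle _ _ h21; rw [key, hp₂, hq₁] at e21
  have e22 := sqle _ _ h22; rw [key, hp₂, hq₂] at e22
  have epp := sqge _ _ hpp; rw [key, hp₁, hp₂] at epp
  have eqq := sqge _ _ hqq; rw [key, hq₁, hq₂] at eqq
  set s := p₁ + p₂
  set t := q₁ + q₂
  have hns : ‖s‖^2 = 2 + 2 * inner ℝ p₁ p₂ := by
    rw [norm_add_sq_real, hp₁, hp₂]; ring
  have hnt : ‖t‖^2 = 2 + 2 * inner ℝ q₁ q₂ := by
    rw [norm_add_sq_real, hq₁, hq₂]; ring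
  have hst : (inner ℝ s t : ℝ) =
      inner ℝ p₁ q₁ + inner ℝ p₁ q₂ + inner ℝ p₂ q₁ + inner ℝ p₂ q₂ := by
    show (inner ℝ (p₁+p₂) (q₁+q₂) : ℝ) = _
    rw [inner_add_left, inner_add_right, inner_add_right]
    ring
  have cs : (inner ℝ s t : ℝ) ≤ ‖s‖ * ‖t‖ := real_inner_le_norm s t
  have hsn : ‖s‖ * ‖t‖ ≤ 4*γ - γ^2 := by
    have h1 : ‖s‖^2 ≤ 4*γ - γ^2 := by nlinarith
    have h2 : ‖t‖^2 ≤ 4*γ - γ^2 := by nlinarith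
    have hb : (0:ℝ) ≤ 4*γ - γ^2 := by nlinarith
    have hprod : ‖s‖^2 * ‖t‖^2 ≤ (4*γ-γ^2) * (4*γ-γ^2) :=
      mul_le_mul h1 h2 (sq_nonneg _) hb
    nlinarith [hprod, mul_nonneg (norm_nonneg s) (norm_nonneg t), hb]
  have hlow : 4 * Real.sqrt 2 * γ - 2 * γ^2 ≤ (inner ℝ s t : ℝ) := by
    rw [hst]; nlinarith
  nlinarith
end

section
/- Let r ≥ 2, β > 0, z a positive integer, and let G be a graph on vertex set A₁ ∪ … ∪ A_r (disjoint sets, each contained in a ground set of size z), with all edges going between distinct parts. Assume that for every i ≠ j and every pair of subsets B ⊆ A_i, B' ⊆ A_j with |B|, |B'| ≥ β·z, there is an edge of G between B and B'. If |A_i| ≥ 2^r β z for all i and T is a tree on vertex set {1,…,r}, then there exist vertices p₁ ∈ A₁, …, p_r ∈ A_r such that for every edge ij of T, p_i p_j ∈ E(G). -/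
open Classical in
/-- Fuelled "extendable candidate set" recursion for the tree embedding. -/
noncomputable def Dfun {V ι : Type*} (A : ι → Finset V) (ch : ι → Finset ι)
    (adj : V → V → Prop) : ℕ → ι → Finset V
  | 0 => A
  | n+1 => fun i => (A i).filter (fun p => ∀ j ∈ ch i, ∃ q ∈ Dfun A ch adj n j, adj p q)

/-- Abstract form of the tree-embedding lemma: parts `A₁,…,A_r` in a ground set of size `z`,
any two sets of size `≥ βz` on different parts span an edge of `G`, all edges of `G` go between
distinct parts, and `|A_i| ≥ 2^r β z`. Then any tree `T` on `{1,…,r}` embeds with vertex `i`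
going to `A_i`. -/
theorem stmt_6 {V : Type*} [Fintype V] [DecidableEq V] (r : ℕ) (hr : 2 ≤ r)
    (β : ℝ) (hβ : 0 < β) (z : ℕ) (hz : 0 < z) (hV : Fintype.card V = z)
    (A : Fin r → Finset V) (hdisj : ∀ i j, i ≠ j → Disjoint (A i) (A j))
    (G : SimpleGraph V)
    (hbetween : ∀ v w, G.Adj v w → ∀ i : Fin r, ¬(v ∈ A i ∧ w ∈ A i))
    (hcross : ∀ i j : Fin r, i ≠ j → ∀ B ⊆ A i, ∀ B' ⊆ A j,
      β * z ≤ (B.card : ℝ) → β * z ≤ (B'.card : ℝ) →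
      ∃ b ∈ B, ∃ b' ∈ B', G.Adj b b')
    (hsize : ∀ i, (2 : ℝ) ^ r * β * z ≤ ((A i).card : ℝ))
    (T : SimpleGraph (Fin r)) (hT : T.IsTree) :
    ∃ p : Fin r → V, (∀ i, p i ∈ A i) ∧ ∀ i j, T.Adj i j → G.Adj (p i) (p j) := by
  classical
  have hzR : (0 : ℝ) < z := by exact_mod_cast hz
  have hβz : (0 : ℝ) < β * z := mul_pos hβ hzR
  have hrpos : 0 < r := by omega
  have hconn : T.Connected := hT.isConnected
  set root : Fin r := ⟨0, hrpos⟩ with hroot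
  set dp : Fin r → ℕ := fun i => T.dist root i with hdpdef
  -- distances are < r
  have hdplt : ∀ i, dp i < r := by
    intro i
    obtain ⟨w, hw, hlen⟩ := hconn.exists_path_of_dist root i
    have := hw.length_lt
    simp only [Fintype.card_fin] at this
    simpa [hdpdef, ← hlen] using this
  have hdproot : dp root = 0 := by simp [hdpdef]
  have hdp_eq_zero : ∀ j, dp j = 0 → j = root := by
    intro j hj
    exact (hconn.dist_eq_zero_iff.mp hj).symm
  have hdp_pos : ∀ j, j ≠ root → 0 < dp j :=
    fun j hj => hconn.pos_dist_of_ne (fun h => hj h.symm)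
  -- parent function
  have hpar : ∀ j, j ≠ root → ∃ i, T.Adj i j ∧ dp i + 1 = dp j := by
    intro j hj
    obtain ⟨w, hlen⟩ := hconn.exists_walk_length_eq_dist j root
    have hlen' : w.length = dp j := by rw [hlen, SimpleGraph.dist_comm]
    cases w with
    | nil => exact absurd rfl hj
    | @cons _ i _ h q =>
      refine ⟨i, h.symm, ?_⟩
      have h1 : dp i ≤ q.length := by
        have := SimpleGraph.dist_le q
        simpa [hdpdef, SimpleGraph.dist_comm] using this
      have h2 : q.length + 1 = dp j := by simpa using hlen'
      -- also dp j ≤ dp i + 1 : extend a geodesic root → i by the edge i → j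
      obtain ⟨w2, hw2⟩ := hconn.exists_walk_length_eq_dist root i
      have h3 : dp j ≤ dp i + 1 := by
        have := SimpleGraph.dist_le (w2.concat h.symm)
        simpa [SimpleGraph.Walk.length_concat, hw2, hdpdef] using this
      omega
  choose pf hpf1 hpf2 using hpar
  set F : Fin r → Fin r := fun j => if h : j = root then root else pf j h with hFdef
  have hF1 : ∀ j, j ≠ root → T.Adj (F j) j := by
    intro j hj; simp only [hFdef, dif_neg hj]; exact hpf1 j hj
  have hF2 : ∀ j, j ≠ root → dp (F j) + 1 = dp j := by
    intro j hj; simp only [hFdef, dif_neg hj]; exact hpf2 j hj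
  set ch : Fin r → Finset (Fin r) :=
    fun i => Finset.univ.filter (fun j => j ≠ root ∧ F j = i) with hchdef
  have hmem_ch : ∀ j, j ≠ root → j ∈ ch (F j) := by
    intro j hj; simp [hchdef, hj]
  set D : ℕ → Fin r → Finset V := Dfun A ch G.Adj with hDdef
  have hD0 : ∀ i, D 0 i = A i := fun i => rfl
  have hDsucc : ∀ n i, D (n+1) i =
      (A i).filter (fun p => ∀ j ∈ ch i, ∃ q ∈ D n j, G.Adj p q) := by
    intro n i
    rw [hDdef]
    ext p
    rw [Dfun]
    simp only [Finset.mem_filter]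
  have hDsub : ∀ n i, D n i ⊆ A i := by
    intro n i
    cases n with
    | zero => rw [hD0]
    | succ n => rw [hDsucc]; exact Finset.filter_subset _ _
  -- 2^r ≥ r + 1
  have h2r : (r : ℝ) + 1 ≤ (2 : ℝ) ^ r := by
    have h1 : r + 1 ≤ 2 ^ r := Nat.lt_two_pow_self
    exact_mod_cast h1
  have hβzle : β * z ≤ β * z * ((2:ℝ) ^ r - r) := by nlinarith
  -- size lower bound for D n i
  have hP2 : ∀ n i, β * z * ((2:ℝ) ^ r - r) ≤ ((D n i).card : ℝ) := by
    intro n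
    induction n with
    | zero =>
      intro i
      rw [hD0]
      have := hsize i
      nlinarith [mul_nonneg (mul_nonneg hβ.le hzR.le) (Nat.cast_nonneg r)]
    | succ n ih =>
      intro i
      set P : V → Prop := fun p => ∀ j ∈ ch i, ∃ q ∈ D n j, G.Adj p q with hPdef
      set Bad : Fin r → Finset V :=
        fun j => (A i).filter (fun p => ¬ ∃ q ∈ D n j, G.Adj p q) with hBaddef
      have hbadsmall : ∀ j ∈ ch i, ((Bad j).card : ℝ) ≤ β * z := by
        intro j hj
        by_contra hcon
        push_neg at hcon
        have hij : i ≠ j := by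
          simp only [hchdef, Finset.mem_filter] at hj
          obtain ⟨-, hj1, hj2⟩ := hj
          have hadj := hF1 j hj1
          rw [hj2] at hadj
          exact hadj.ne
        obtain ⟨b, hb, b', hb', hadj⟩ :=
          hcross i j hij (Bad j) (Finset.filter_subset _ _) (D n j) (hDsub n j)
            hcon.le (hβzle.trans (ih j))
        rw [hBaddef] at hb
        simp only [Finset.mem_filter] at hb
        exact hb.2 ⟨b', hb', hadj⟩
      have hsubbad : (A i).filter (fun p => ¬ P p) ⊆ (ch i).biUnion Bad := by
        intro p hp
        simp only [Finset.mem_filter, hPdef] at hp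
        push_neg at hp
        obtain ⟨hpA, j, hj, hnj⟩ := hp
        refine Finset.mem_biUnion.mpr ⟨j, hj, ?_⟩
        simp only [hBaddef, Finset.mem_filter]
        push_neg
        exact ⟨hpA, hnj⟩
      have hcount : (((A i).filter (fun p => ¬ P p)).card : ℝ) ≤ (r : ℝ) * (β * z) := by
        have h1 : ((A i).filter (fun p => ¬ P p)).card ≤ ∑ j ∈ ch i, (Bad j).card :=
          le_trans (Finset.card_le_card hsubbad) (Finset.card_biUnion_le)
        have h2 : ((∑ j ∈ ch i, (Bad j).card : ℕ) : ℝ) ≤ ∑ j ∈ ch i, (β * z) := by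
          rw [Nat.cast_sum]
          exact Finset.sum_le_sum hbadsmall
        have h3 : ∑ j ∈ ch i, (β * z) = ((ch i).card : ℝ) * (β * z) := by
          rw [Finset.sum_const, nsmul_eq_mul]
        have h4 : ((ch i).card : ℝ) ≤ (r : ℝ) := by
          have hle : (ch i).card ≤ r := le_trans (Finset.card_le_univ _) (by simp)
          exact_mod_cast hle
        calc (((A i).filter (fun p => ¬ P p)).card : ℝ)
            ≤ ((∑ j ∈ ch i, (Bad j).card : ℕ) : ℝ) := by exact_mod_cast h1
          _ ≤ ((ch i).card : ℝ) * (β * z) := by rw [← h3]; exact h2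
          _ ≤ (r : ℝ) * (β * z) := by nlinarith
      have hsplit : ((A i).filter P).card + ((A i).filter (fun p => ¬ P p)).card
          = (A i).card := Finset.card_filter_add_card_filter_not P
      have hDcard : (D (n+1) i).card = ((A i).filter P).card := by
        rw [hDsucc]
      have := hsize i
      have hsplitR : (((A i).filter P).card : ℝ) + (((A i).filter (fun p => ¬ P p)).card : ℝ)
          = ((A i).card : ℝ) := by exact_mod_cast hsplit
      rw [hDcard]
      nlinarith
  set E : Fin r → Finset V := fun i => D (r - dp i) i with hEdef
  have hEcard : ∀ i, β * z ≤ ((E i).card : ℝ) := fun i => hβzle.trans (hP2 _ i)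
  have hEne : ∀ i, (E i).Nonempty := by
    intro i
    rw [← Finset.card_pos]
    rcases Nat.eq_zero_or_pos (E i).card with h0 | h0
    · exfalso
      have hc := hEcard i
      rw [h0] at hc
      simp only [Nat.cast_zero] at hc
      nlinarith
    · exact h0
  have hEsub : ∀ i, E i ⊆ A i := fun i => hDsub _ i
  -- extension lemma
  have hext : ∀ i, ∀ p ∈ E i, ∀ j, j ≠ root → F j = i → ∃ q ∈ E j, G.Adj p q := by
    intro i p hp j hj hFj
    have hdpj : dp i + 1 = dp j := hFj ▸ hF2 j hj
    have hlti : dp i < r := hdplt i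
    have hltj : dp j < r := hdplt j
    have hfuel : r - dp i = (r - dp j) + 1 := by omega
    rw [hEdef] at hp
    simp only at hp
    rw [hfuel, hDsucc] at hp
    simp only [Finset.mem_filter] at hp
    exact hp.2 j (hFj ▸ hmem_ch j hj)
  -- build the embedding by induction on distance from root
  have hemb : ∀ n, ∃ p : Fin r → V, ∀ j, dp j ≤ n →
      p j ∈ E j ∧ (j ≠ root → G.Adj (p (F j)) (p j)) := by
    intro n
    induction n with
    | zero =>
      refine ⟨fun j => (hEne j).choose, fun j hj => ?_⟩
      have hjr : j = root := hdp_eq_zero j (Nat.le_zero.mp hj)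
      exact ⟨(hEne j).choose_spec, fun h => absurd hjr h⟩
    | succ n ih =>
      obtain ⟨p, hp⟩ := ih
      have hchoice : ∀ j, dp j = n + 1 → ∃ q, q ∈ E j ∧ G.Adj (p (F j)) q := by
        intro j hj
        have hjr : j ≠ root := by
          intro h; rw [h, hdproot] at hj; omega
        have hdpF : dp (F j) = n := by have := hF2 j hjr; omega
        have hpF : p (F j) ∈ E (F j) := (hp (F j) (by omega)).1
        obtain ⟨q, hq1, hq2⟩ := hext (F j) (p (F j)) hpF j hjr rfl
        exact ⟨q, hq1, hq2⟩
      choose g hg1 hg2 using hchoice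
      refine ⟨fun j => if h : dp j = n + 1 then g j h else p j, fun j hj => ?_⟩
      by_cases h : dp j = n + 1
      · have hjr : j ≠ root := by
          intro hh; rw [hh, hdproot] at h; omega
        have hdpF : dp (F j) = n := by have := hF2 j hjr; omega
        simp only [dif_pos h, dif_neg (by omega : ¬ dp (F j) = n + 1)]
        exact ⟨hg1 j h, fun _ => hg2 j h⟩
      · have hj' : dp j ≤ n := by omega
        have hFj' : j ≠ root → ¬ dp (F j) = n + 1 := by
          intro hjr; have := hF2 j hjr; omega
        simp only [dif_neg h]
        refine ⟨(hp j hj').1, fun hjr => ?_⟩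
        rw [dif_neg (hFj' hjr)]
        exact (hp j hj').2 hjr
  obtain ⟨p, hp⟩ := hemb r
  have hpall : ∀ j, p j ∈ E j ∧ (j ≠ root → G.Adj (p (F j)) (p j)) :=
    fun j => hp j (hdplt j).le
  -- every edge of T is a parent edge, by counting
  have hedge : ∀ i j, T.Adj i j → ∃ j', j' ≠ root ∧
      ((j' = i ∧ F j' = j) ∨ (j' = j ∧ F j' = i)) := by
    intro i j hadj
    set φ : Fin r → Sym2 (Fin r) := fun j => s(j, F j) with hφdef
    have hFadj : ∀ j, j ≠ root → T.Adj j (F j) := fun j hj => (hF1 j hj).symm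
    have hsubE : (Finset.univ.erase root).image φ ⊆ T.edgeFinset := by
      intro e he
      obtain ⟨j', hj', rfl⟩ := Finset.mem_image.mp he
      have hj'r : j' ≠ root := Finset.ne_of_mem_erase hj'
      rw [SimpleGraph.mem_edgeFinset]
      exact (hFadj j' hj'r)
    have hinj : Set.InjOn φ (Finset.univ.erase root) := by
      intro a ha b hb hab
      have har : a ≠ root := Finset.ne_of_mem_erase ha
      have hbr : b ≠ root := Finset.ne_of_mem_erase hb
      rw [hφdef] at hab
      simp only [Sym2.eq_iff] at hab
      rcases hab with ⟨h1, h2⟩ | ⟨h1, h2⟩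
      · exact h1
      · exfalso
        have ha2 := hF2 a har
        have hb2 := hF2 b hbr
        rw [h2] at ha2
        rw [← h1] at hb2
        omega
    have hcard1 : ((Finset.univ.erase root).image φ).card = r - 1 := by
      rw [Finset.card_image_of_injOn hinj, Finset.card_erase_of_mem (Finset.mem_univ _)]
      simp
    have hcard2 : T.edgeFinset.card + 1 = r := by
      have h := hT.card_edgeFinset
      simpa using h
    have heq : (Finset.univ.erase root).image φ = T.edgeFinset :=
      Finset.eq_of_subset_of_card_le hsubE (by omega)
    have hmem : s(i, j) ∈ (Finset.univ.erase root).image φ := by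
      rw [heq, SimpleGraph.mem_edgeFinset]
      exact hadj
    obtain ⟨j', hj', hφj'⟩ := Finset.mem_image.mp hmem
    rw [hφdef] at hφj'
    simp only [Sym2.eq_iff] at hφj'
    refine ⟨j', Finset.ne_of_mem_erase hj', ?_⟩
    rcases hφj' with ⟨h1, h2⟩ | ⟨h1, h2⟩
    · exact Or.inl ⟨h1, h2⟩
    · exact Or.inr ⟨h1, h2⟩
  refine ⟨p, fun i => hEsub i ((hpall i).1), fun i j hadj => ?_⟩
  obtain ⟨j', hj'r, hcase⟩ := hedge i j hadj
  rcases hcase with ⟨h1, h2⟩ | ⟨h1, h2⟩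
  · -- j' = i, F j' = j : p j adjacent to p i
    have hthis := (hpall j').2 hj'r
    rw [h2, h1] at hthis
    exact hthis.symm
  · have hthis := (hpall j').2 hj'r
    rw [h2, h1] at hthis
    exact hthis
end

section
/- (Dependent random choice) Let a, m, n, r, t be positive integers and let G be a graph on n vertices with average degree d = 2|E(G)|/n. If d^t/n^{t−1} − C(n,r)·(m/n)^t ≥ a, then G contains a set U of at least a vertices such that every r-element subset of U has at least m common neighbors. -/
open Finset

section Aux

variable {V : Type*} [Fintype V] [DecidableEq V] (G : SimpleGraph V) [DecidableRel G.Adj]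

/-- common neighborhood of a finite set of vertices -/
def drcCns (S : Finset V) : Finset V := univ.filter fun v => ∀ s ∈ S, G.Adj v s

/-- common neighborhood of the range of a tuple -/
def drcCnf (t : ℕ) (f : Fin t → V) : Finset V := univ.filter fun v => ∀ i, G.Adj v (f i)

/-- bad r-sets contained in the common neighborhood of the tuple -/
def drcBad (t r m : ℕ) (f : Fin t → V) : Finset (Finset V) :=
  ((univ : Finset V).powersetCard r).filter fun S => (drcCns G S).card < m ∧ S ⊆ drcCnf G t f

lemma drcKey (t : ℕ) (s : Finset V) :
    ((univ : Finset (Fin t → V)).filter fun f => ∀ i, f i ∈ s).card = s.card ^ t := by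
  have h : ((univ : Finset (Fin t → V)).filter fun f => ∀ i, f i ∈ s)
      = Fintype.piFinset fun _ => s := by
    ext f; simp [Fintype.mem_piFinset]
  rw [h, Fintype.card_piFinset]
  simp

lemma drcSubIff (t : ℕ) (f : Fin t → V) (S : Finset V) :
    S ⊆ drcCnf G t f ↔ ∀ i, f i ∈ drcCns G S := by
  simp only [drcCnf, drcCns, Finset.subset_iff, mem_filter, mem_univ, true_and]
  constructor
  · intro h i s hs
    exact (h hs i).symm
  · intro h s hs i
    exact (h i s hs).symm

lemma drcH1 (t : ℕ) :
    ∑ f : Fin t → V, (drcCnf G t f).card = ∑ v : V, G.degree v ^ t := by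
  simp only [drcCnf, card_filter]
  rw [Finset.sum_comm]
  refine Finset.sum_congr rfl fun v _ => ?_
  rw [← card_filter]
  have h : ((univ : Finset (Fin t → V)).filter fun f => ∀ i, G.Adj v (f i))
      = (univ : Finset (Fin t → V)).filter fun f => ∀ i, f i ∈ G.neighborFinset v := by
    ext f; simp [SimpleGraph.mem_neighborFinset]
  rw [h, drcKey, SimpleGraph.card_neighborFinset_eq_degree]

lemma drcH2 (t r m : ℕ) :
    ∑ f : Fin t → V, (drcBad G t r m f).card ≤ (Fintype.card V).choose r * m ^ t := by
  simp only [drcBad, card_filter]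
  rw [Finset.sum_comm]
  have hbound : ∀ S ∈ (univ : Finset V).powersetCard r,
      (∑ f : Fin t → V, if (drcCns G S).card < m ∧ S ⊆ drcCnf G t f then 1 else 0) ≤ m ^ t := by
    intro S _
    by_cases hc : (drcCns G S).card < m
    · have heq : ∀ f : Fin t → V,
          (if (drcCns G S).card < m ∧ S ⊆ drcCnf G t f then 1 else 0)
            = (if (∀ i, f i ∈ drcCns G S) then 1 else 0) := by
        intro f
        congr 1
        simp [hc, drcSubIff]
      calc (∑ f : Fin t → V, if (drcCns G S).card < m ∧ S ⊆ drcCnf G t f then 1 else 0)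
          = ∑ f : Fin t → V, (if (∀ i, f i ∈ drcCns G S) then 1 else 0) := by
            exact Finset.sum_congr rfl fun f _ => heq f
        _ = ((univ : Finset (Fin t → V)).filter fun f => ∀ i, f i ∈ drcCns G S).card := by
            rw [card_filter]
        _ = (drcCns G S).card ^ t := drcKey t _
        _ ≤ m ^ t := Nat.pow_le_pow_left (Nat.le_of_lt hc) t
    · simp [hc]
  calc ∑ S ∈ (univ : Finset V).powersetCard r,
        (∑ f : Fin t → V, if (drcCns G S).card < m ∧ S ⊆ drcCnf G t f then 1 else 0)
      ≤ ∑ _S ∈ (univ : Finset V).powersetCard r, m ^ t := Finset.sum_le_sum hbound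
    _ = (Fintype.card V).choose r * m ^ t := by
        rw [Finset.sum_const, smul_eq_mul, Finset.card_powersetCard, Finset.card_univ]

end Aux

/-- Dependent random choice: if `d = 2|E(G)|/n` and
`d^t/n^{t-1} - C(n,r)(m/n)^t ≥ a`, then `G` has a vertex set `U` of size at least `a`
every `r` vertices of which have at least `m` common neighbors. -/
theorem stmt_10 {V : Type*} [Fintype V] [DecidableEq V]
    (G : SimpleGraph V) [DecidableRel G.Adj]
    (a m n r t : ℕ) (ha : 0 < a) (hm : 0 < m) (hn : 0 < n) (hr : 0 < r) (ht : 0 < t)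
    (hcard : Fintype.card V = n) (d : ℝ)
    (hd : d = 2 * (G.edgeFinset.card : ℝ) / n)
    (hineq : (a : ℝ) ≤ d ^ t / (n : ℝ) ^ (t - 1) - (n.choose r : ℝ) * ((m : ℝ) / n) ^ t) :
    ∃ U : Finset V, (a : ℕ) ≤ U.card ∧
      ∀ S ⊆ U, S.card = r →
        m ≤ (Finset.univ.filter (fun v => ∀ s ∈ S, G.Adj v s)).card := by
  classical
  have hV : Nonempty V := Fintype.card_pos_iff.mp (hcard ▸ hn)
  set N : ℝ := (n : ℝ) with hN
  have hNpos : (0 : ℝ) < N := by rw [hN]; exact_mod_cast hn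
  have hNt : N ^ t = N ^ (t - 1) * N := by
    rw [← pow_succ, Nat.sub_add_cancel ht]
  have hNt1pos : (0 : ℝ) < N ^ (t - 1) := pow_pos hNpos _
  -- degree sum
  have hds : (∑ v : V, (G.degree v : ℝ)) = 2 * (G.edgeFinset.card : ℝ) := by
    exact_mod_cast congrArg (Nat.cast : ℕ → ℝ) (SimpleGraph.sum_degrees_eq_twice_card_edges G)
  have hdeg : (∑ v : V, (G.degree v : ℝ)) = d * N := by
    rw [hd, hds]
    field_simp
  -- convexity / Jensen step
  have h3 : d ^ t * N ≤ ∑ v : V, (G.degree v : ℝ) ^ t := by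
    have := pow_sum_div_card_le_sum_pow (s := (univ : Finset V))
      (f := fun v => (G.degree v : ℝ)) (fun i _ => by positivity) (t - 1)
    rw [Nat.sub_add_cancel ht] at this
    rw [hdeg, Finset.card_univ, hcard] at this
    have hcalc : (d * N) ^ t / N ^ (t - 1) = d ^ t * N := by
      rw [mul_pow, hNt]
      field_simp
    rw [hcalc] at this
    exact this
  -- scale the hypothesis
  have h4 : (a : ℝ) * N ^ t + (n.choose r : ℝ) * (m : ℝ) ^ t ≤ d ^ t * N := by
    have h5 : (a : ℝ) * N ^ t ≤ (d ^ t / N ^ (t - 1) - (n.choose r : ℝ) * ((m : ℝ) / N) ^ t) * N ^ t :=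
      mul_le_mul_of_nonneg_right hineq (le_of_lt (pow_pos hNpos t))
    have h6 : (d ^ t / N ^ (t - 1) - (n.choose r : ℝ) * ((m : ℝ) / N) ^ t) * N ^ t
        = d ^ t * N - (n.choose r : ℝ) * (m : ℝ) ^ t := by
      rw [div_pow, sub_mul, hNt]
      field_simp
    rw [h6] at h5
    linarith
  -- sums over all tuples
  have h1 := drcH1 G t
  have h2 := drcH2 G t r m
  rw [hcard] at h2
  have hcardfun : Fintype.card (Fin t → V) = n ^ t := by
    simp [Fintype.card_fun, hcard]
  -- pigeonhole: find a good tuple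
  have hpigeon : ∃ f : Fin t → V, a + (drcBad G t r m f).card ≤ (drcCnf G t f).card := by
    by_contra hcon
    push_neg at hcon
    have hstep : ∀ f : Fin t → V, (drcCnf G t f).card + 1 ≤ a + (drcBad G t r m f).card :=
      fun f => hcon f
    have hsum : (∑ f : Fin t → V, (drcCnf G t f).card) + n ^ t
        ≤ a * n ^ t + ∑ f : Fin t → V, (drcBad G t r m f).card := by
      have := Finset.sum_le_sum (fun f (_ : f ∈ (univ : Finset (Fin t → V))) => hstep f)
      rw [Finset.sum_add_distrib, Finset.sum_add_distrib, Finset.sum_const, Finset.sum_const,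
        Finset.card_univ, hcardfun] at this
      simpa [mul_comm] using this
    -- now compare in ℝ
    have hSA : (a : ℝ) * N ^ t + (∑ f : Fin t → V, ((drcBad G t r m f).card : ℝ))
        ≤ ∑ f : Fin t → V, ((drcCnf G t f).card : ℝ) := by
      have hb : (∑ f : Fin t → V, ((drcBad G t r m f).card : ℝ))
          ≤ (n.choose r : ℝ) * (m : ℝ) ^ t := by
        calc (∑ f : Fin t → V, ((drcBad G t r m f).card : ℝ))
            = ((∑ f : Fin t → V, (drcBad G t r m f).card : ℕ) : ℝ) := by push_cast; ring
          _ ≤ ((n.choose r * m ^ t : ℕ) : ℝ) := by exact_mod_cast h2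
          _ = (n.choose r : ℝ) * (m : ℝ) ^ t := by push_cast; ring
      have hA : d ^ t * N ≤ ∑ f : Fin t → V, ((drcCnf G t f).card : ℝ) := by
        have : ((∑ f : Fin t → V, (drcCnf G t f).card : ℕ) : ℝ)
            = ∑ v : V, (G.degree v : ℝ) ^ t := by
          rw [h1]; push_cast; ring
        calc d ^ t * N ≤ ∑ v : V, (G.degree v : ℝ) ^ t := h3
          _ = _ := by rw [← this]; push_cast; ring
      linarith
    have hsumR : (∑ f : Fin t → V, ((drcCnf G t f).card : ℝ)) + N ^ t
        ≤ (a : ℝ) * N ^ t + ∑ f : Fin t → V, ((drcBad G t r m f).card : ℝ) := by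
      rw [hN]
      exact_mod_cast hsum
    have : (0 : ℝ) < N ^ t := pow_pos hNpos t
    linarith
  obtain ⟨f, hf⟩ := hpigeon
  -- construct U by deleting one vertex from each bad set
  set φ : Finset V → V := fun S => if h : S.Nonempty then h.choose else Classical.arbitrary V
    with hφ
  refine ⟨drcCnf G t f \ (drcBad G t r m f).image φ, ?_, ?_⟩
  · have h7 : (drcCnf G t f).card ≤ (drcCnf G t f \ (drcBad G t r m f).image φ).card
        + ((drcBad G t r m f).image φ).card := Finset.card_le_card_sdiff_add_card
    have h8 : ((drcBad G t r m f).image φ).card ≤ (drcBad G t r m f).card :=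
      Finset.card_image_le
    omega
  · intro S hS hScard
    by_contra hbad
    push_neg at hbad
    have hSsub : S ⊆ drcCnf G t f := hS.trans Finset.sdiff_subset
    have hSne : S.Nonempty := Finset.card_pos.mp (hScard ▸ hr)
    have hSmem : S ∈ drcBad G t r m f := by
      rw [drcBad, Finset.mem_filter, Finset.mem_powersetCard]
      exact ⟨⟨Finset.subset_univ S, hScard⟩, hbad, hSsub⟩
    have hφS : φ S ∈ S := by
      rw [hφ]
      simp only [dif_pos hSne]
      exact hSne.choose_spec
    have hφmem : φ S ∈ (drcBad G t r m f).image φ := Finset.mem_image_of_mem φ hSmem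
    have := hS hφS
    rw [Finset.mem_sdiff] at this
    exact this.2 hφmem
end
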